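/- Suppose A has full row rank and (x, s) ∈ P° × D°. Then for any δ_μ ∈ ℝ^n, the linear system S δ_x + X δ_s = δ_μ, A δ_x = 0, Aᵀ δ_y + δ_s = 0 has a unique solution (δ_x, δ_s, δ_y), and it is given by X⁻¹δ_x = (I − P_proj)(δ_μ/μ) and S⁻¹δ_s = P_proj(δ_μ/μ), where μ = xs componentwise. -/

import Mathlib

open Matrix

/-- The projection-like matrix `P = S⁻¹Aᵀ(A S⁻¹ X Aᵀ)⁻¹ A X`. -/
noncomputable def Pproj {d n : ℕ} (A : Matrix (Fin d) (Fin n) ℝ) (x s : Fin n → ℝ) :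
    Matrix (Fin n) (Fin n) ℝ :=
  (Matrix.diagonal s)⁻¹ * Aᵀ * (A * (Matrix.diagonal s)⁻¹ * Matrix.diagonal x * Aᵀ)⁻¹ *
    A * Matrix.diagonal x

/-- Full row rank implies `A D Aᵀ` is a unit for positive diagonal `D`. -/
lemma newton_aux_isUnit {d n : ℕ} (A : Matrix (Fin d) (Fin n) ℝ) (hA : A.rank = d)
    (w : Fin n → ℝ) (hw : ∀ i, 0 < w i) :
    IsUnit (A * Matrix.diagonal w * Aᵀ) := by
  have hli : LinearIndependent ℝ (fun i => A i) := by
    rw [linearIndependent_iff_card_eq_finrank_span, Fintype.card_fin]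
    have h := A.rank_eq_finrank_span_row
    rw [hA] at h
    exact h
  have hinj : Function.Injective A.vecMul := Matrix.vecMul_injective_iff.mpr hli
  rw [← Matrix.mulVec_injective_iff_isUnit]
  have key : ∀ v, (A * Matrix.diagonal w * Aᵀ) *ᵥ v = 0 → v = 0 := by
    intro v hv
    have h1 : v ⬝ᵥ ((A * Matrix.diagonal w * Aᵀ) *ᵥ v) = 0 := by rw [hv, dotProduct_zero]
    rw [← mulVec_mulVec, ← mulVec_mulVec, dotProduct_mulVec, mulVec_transpose] at h1
    set u := v ᵥ* A with hu
    have hsum : ∑ i, w i * (u i * u i) = 0 := by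
      rw [← h1]
      simp only [dotProduct, mulVec_diagonal]
      exact Finset.sum_congr rfl fun i _ => by ring
    have hAv : u = 0 := by
      funext j
      have h2 := (Finset.sum_eq_zero_iff_of_nonneg (fun i _ =>
        mul_nonneg (hw i).le (mul_self_nonneg (u i)))).mp hsum j (Finset.mem_univ j)
      have h3 : u j * u j = 0 := by
        rcases mul_eq_zero.mp h2 with h | h
        · exact absurd h (hw j).ne'
        · exact h
      exact mul_self_eq_zero.mp h3
    apply hinj
    show v ᵥ* A = A.vecMul 0
    rw [← hu, hAv]
    funext j
    simp [Matrix.vecMul, dotProduct]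
  intro a b hab
  have : (A * Matrix.diagonal w * Aᵀ) *ᵥ (a - b) = 0 := by
    rw [mulVec_sub, hab, sub_self]
  exact sub_eq_zero.mp (key _ this)

/-- The Newton step system `S δx + X δs = δμ`, `A δx = 0`, `Aᵀ δy + δs = 0` has a unique
solution, given by `X⁻¹ δx = (I − P)(δμ/μ)` and `S⁻¹ δs = P (δμ/μ)` where `μ = xs`. -/
theorem newton_step {d n : ℕ}
    (A : Matrix (Fin d) (Fin n) ℝ) (b : Fin d → ℝ) (c : Fin n → ℝ)
    (hA : A.rank = d)
    (x s : Fin n → ℝ)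
    (hx : A.mulVec x = b ∧ ∀ i, 0 < x i)
    (hs : (∃ y : Fin d → ℝ, Aᵀ.mulVec y + s = c) ∧ ∀ i, 0 < s i)
    (δμ : Fin n → ℝ) :
    (∃! sol : (Fin n → ℝ) × (Fin n → ℝ) × (Fin d → ℝ),
      (Matrix.diagonal s).mulVec sol.1 + (Matrix.diagonal x).mulVec sol.2.1 = δμ ∧
      A.mulVec sol.1 = 0 ∧ Aᵀ.mulVec sol.2.2 + sol.2.1 = 0) ∧
    (∀ (δx δs : Fin n → ℝ) (δy : Fin d → ℝ),
      (Matrix.diagonal s).mulVec δx + (Matrix.diagonal x).mulVec δs = δμ →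
      A.mulVec δx = 0 → Aᵀ.mulVec δy + δs = 0 →
      (fun i => δx i / x i) =
        ((1 : Matrix (Fin n) (Fin n) ℝ) - Pproj A x s).mulVec
          (fun i => δμ i / (x i * s i)) ∧
      (fun i => δs i / s i) = (Pproj A x s).mulVec (fun i => δμ i / (x i * s i))) := by
  obtain ⟨-, hx⟩ := hx
  obtain ⟨-, hs⟩ := hs
  have hxne : ∀ i, x i ≠ 0 := fun i => (hx i).ne'
  have hsne : ∀ i, s i ≠ 0 := fun i => (hs i).ne'
  set Sinv : Matrix (Fin n) (Fin n) ℝ := Matrix.diagonal (fun i => (s i)⁻¹) with hSinvdef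
  set T : Matrix (Fin n) (Fin n) ℝ := Matrix.diagonal (fun i => (x i * s i)⁻¹) with hTdef
  have hSSinv : Matrix.diagonal s * Sinv = 1 := by
    rw [hSinvdef, diagonal_mul_diagonal, ← Matrix.diagonal_one]
    exact congrArg Matrix.diagonal (funext fun i => mul_inv_cancel₀ (hsne i))
  have hSinvS : Sinv * Matrix.diagonal s = 1 := by
    rw [hSinvdef, diagonal_mul_diagonal, ← Matrix.diagonal_one]
    exact congrArg Matrix.diagonal (funext fun i => inv_mul_cancel₀ (hsne i))
  have hS : (Matrix.diagonal s)⁻¹ = Sinv := Matrix.inv_eq_right_inv hSSinv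
  set M : Matrix (Fin d) (Fin d) ℝ :=
    A * (Matrix.diagonal s)⁻¹ * Matrix.diagonal x * Aᵀ with hMdef
  have hMw : M = A * Matrix.diagonal (fun i => (s i)⁻¹ * x i) * Aᵀ := by
    rw [hMdef, hS, Matrix.mul_assoc A Sinv, hSinvdef, diagonal_mul_diagonal]
  have hMunit : IsUnit M := by
    rw [hMw]
    exact newton_aux_isUnit A hA _ (fun i => mul_pos (inv_pos.mpr (hs i)) (hx i))
  have hMdet : IsUnit M.det := (Matrix.isUnit_iff_isUnit_det M).mp hMunit
  have hMM : M * M⁻¹ = 1 := Matrix.mul_nonsing_inv M hMdet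
  have hMM' : M⁻¹ * M = 1 := Matrix.nonsing_inv_mul M hMdet
  have hM2 : A * (Sinv * (Matrix.diagonal x * Aᵀ)) = M := by
    rw [hMdef, hS, Matrix.mul_assoc, Matrix.mul_assoc]
  set u : Fin d → ℝ := A *ᵥ (Sinv *ᵥ δμ) with hu
  set δy₀ : Fin d → ℝ := -(M⁻¹ *ᵥ u) with hy0
  set δs₀ : Fin n → ℝ := -(Aᵀ *ᵥ δy₀) with hs0
  set δx₀ : Fin n → ℝ := Sinv *ᵥ (δμ - Matrix.diagonal x *ᵥ δs₀) with hx0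
  have hs0' : δs₀ = Aᵀ *ᵥ (M⁻¹ *ᵥ u) := by rw [hs0, hy0, mulVec_neg, neg_neg]
  -- characterization of any solution
  have hchar : ∀ (δx δs : Fin n → ℝ) (δy : Fin d → ℝ),
      Matrix.diagonal s *ᵥ δx + Matrix.diagonal x *ᵥ δs = δμ → A *ᵥ δx = 0 →
      Aᵀ *ᵥ δy + δs = 0 →
      δy = δy₀ ∧ δs = δs₀ ∧ δx = Sinv *ᵥ (δμ - Matrix.diagonal x *ᵥ δs) := by
    intro δx δs δy h1 h2 h3
    have e3 : δs = -(Aᵀ *ᵥ δy) := (neg_eq_of_add_eq_zero_right h3).symm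
    have e1 : δx = Sinv *ᵥ (δμ - Matrix.diagonal x *ᵥ δs) := by
      rw [← eq_sub_of_add_eq h1, mulVec_mulVec, hSinvS, one_mulVec]
    have h4 : u + M *ᵥ δy = 0 := by
      rw [← h2, e1, e3, hu, ← hM2]
      simp only [mulVec_sub, mulVec_neg, sub_neg_eq_add, mulVec_mulVec, mulVec_add,
        Matrix.mul_assoc]
    have ey : δy = δy₀ := by
      have h5 : M *ᵥ δy = -u := eq_neg_of_add_eq_zero_right h4
      calc δy = (M⁻¹ * M) *ᵥ δy := by rw [hMM', one_mulVec]
        _ = M⁻¹ *ᵥ (M *ᵥ δy) := (mulVec_mulVec δy M⁻¹ M).symm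
        _ = M⁻¹ *ᵥ (-u) := by rw [h5]
        _ = δy₀ := by rw [hy0, mulVec_neg]
    have es : δs = δs₀ := by rw [e3, ey, ← hs0]
    exact ⟨ey, es, e1⟩
  -- the explicit solution satisfies the system
  have E3 : Aᵀ *ᵥ δy₀ + δs₀ = 0 := by rw [hs0, add_neg_cancel]
  have E1 : Matrix.diagonal s *ᵥ δx₀ + Matrix.diagonal x *ᵥ δs₀ = δμ := by
    rw [hx0, mulVec_mulVec, hSSinv, one_mulVec, sub_add_cancel]
  have E2 : A *ᵥ δx₀ = 0 := by
    have K2 : A * (Sinv * (Matrix.diagonal x * (Aᵀ * (M⁻¹ * (A * Sinv))))) = A * Sinv := by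
      rw [show A * (Sinv * (Matrix.diagonal x * (Aᵀ * (M⁻¹ * (A * Sinv)))))
          = A * (Sinv * (Matrix.diagonal x * Aᵀ)) * M⁻¹ * (A * Sinv) from by
        simp only [Matrix.mul_assoc], hM2, hMM, Matrix.one_mul]
    rw [hx0, hs0', hu]
    simp only [mulVec_sub, mulVec_mulVec, Matrix.mul_assoc, K2, sub_self]
  constructor
  · refine ⟨(δx₀, δs₀, δy₀), ⟨E1, E2, E3⟩, ?_⟩
    rintro ⟨δx, δs, δy⟩ ⟨h1, h2, h3⟩
    obtain ⟨ey, es, e1⟩ := hchar δx δs δy h1 h2 h3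
    have ex : δx = δx₀ := by rw [e1, es, hx0]
    simp only [Prod.mk.injEq]
    exact ⟨ex, es, ey⟩
  · intro δx δs δy h1 h2 h3
    obtain ⟨ey, es, e1⟩ := hchar δx δs δy h1 h2 h3
    have hr : (fun i => δμ i / (x i * s i)) = T *ᵥ δμ := by
      funext i
      rw [hTdef, mulVec_diagonal, div_eq_mul_inv, mul_comm]
    have hXT : Matrix.diagonal x * T = Sinv := by
      rw [hTdef, hSinvdef, diagonal_mul_diagonal]
      exact congrArg Matrix.diagonal (funext fun i => by
        rw [mul_inv, ← mul_assoc, mul_inv_cancel₀ (hxne i), one_mul])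
    have hf2 : (fun i => δs i / s i) = (Pproj A x s) *ᵥ (fun i => δμ i / (x i * s i)) := by
      have lhs : (fun i => δs i / s i) = Sinv *ᵥ δs := by
        funext i
        rw [hSinvdef, mulVec_diagonal, div_eq_mul_inv, mul_comm]
      rw [lhs, hr, es, hs0', hu, Pproj, ← hMdef, hS]
      simp only [mulVec_mulVec, Matrix.mul_assoc, hXT]
    refine ⟨?_, hf2⟩
    rw [Matrix.sub_mulVec, Matrix.one_mulVec, ← hf2, e1]
    funext i
    simp only [hSinvdef, mulVec_diagonal, Pi.sub_apply]
    have h1 := hxne i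
    have h2 := hsne i
    field_simp
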